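/- arXiv:1801.01014 — 2 statements merged into one kernel-verified Lean document; each statement's English description precedes it below -/
import Mathlib

section
/- Let (X,d) be an unbounded metric space and let r̃ be a scaling sequence. Then the following are equivalent: (1) the labeling ρ⁰ : V(G_{X,r̃}) → ℝ⁺ is injective; (2) for every infinite subsequence r̃' of r̃, the induced homomorphism Em' : V(G_{X,r̃}) → V(G_{X,r̃'}) is injective (a monomorphism). -/
open Filter Topology
open scoped Classical

/-- An unbounded metric space. -/
def UnboundedSpace (X : Type*) [MetricSpace X] : Prop :=
  ¬ Bornology.IsBounded (Set.univ : Set X)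

/-- A scaling sequence: positive reals tending to infinity. -/
def ScalingSeq (r : ℕ → ℝ) : Prop :=
  (∀ n, 0 < r n) ∧ Filter.Tendsto r Filter.atTop Filter.atTop

/-- Two sequences are mutually stable w.r.t. `r` if `d(x_n, y_n)/r_n` has a finite limit. -/
def MutuallyStable {X : Type*} [MetricSpace X] (r : ℕ → ℝ) (x y : ℕ → X) : Prop :=
  ∃ L : ℝ, Filter.Tendsto (fun n => dist (x n) (y n) / r n) Filter.atTop (nhds L)

/-- `Seq(X, r̃)`: sequences going to infinity such that `d(x_n, p)/r_n` has a finite limit. -/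
def SeqInf {X : Type*} [MetricSpace X] (r : ℕ → ℝ) (p : X) : Set (ℕ → X) :=
  {x | Filter.Tendsto (fun n => dist (x n) p) Filter.atTop Filter.atTop ∧
    ∃ L : ℝ, Filter.Tendsto (fun n => dist (x n) p / r n) Filter.atTop (nhds L)}

/-- The relation `x̃ ≡ ỹ`, i.e. `d(x_n, y_n)/r_n → 0`. -/
def EquivSeq {X : Type*} [MetricSpace X] (r : ℕ → ℝ) (x y : ℕ → X) : Prop :=
  Filter.Tendsto (fun n => dist (x n) (y n) / r n) Filter.atTop (nhds 0)

/-- The `≡`-equivalence class of `x` inside `Seq(X, r̃)`. -/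
def classOf {X : Type*} [MetricSpace X] (r : ℕ → ℝ) (p : X) (x : ℕ → X) : Set (ℕ → X) :=
  {y | y ∈ SeqInf r p ∧ EquivSeq r x y}

/-- The vertex set of the cluster graph `G_{X, r̃}`: all `≡`-classes of `Seq(X, r̃)`. -/
def VertexSet {X : Type*} [MetricSpace X] (r : ℕ → ℝ) (p : X) : Set (Set (ℕ → X)) :=
  {v | ∃ x ∈ SeqInf r p, v = classOf r p x}

/-- Adjacency in the cluster graph `G_{X, r̃}`: distinct classes whose representatives
are mutually stable. -/
def AdjacentCl {X : Type*} [MetricSpace X] (r : ℕ → ℝ) (p : X) (u v : Set (ℕ → X)) : Prop :=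
  u ∈ VertexSet r p ∧ v ∈ VertexSet r p ∧ u ≠ v ∧
    ∀ x ∈ u, ∀ y ∈ v, MutuallyStable r x y

/-- The weight `ρ_X` on the cluster graph: for an edge `{u,v}` it is the (unique) limit
`lim d(x_n, y_n)/r_n` for representatives. -/
noncomputable def rhoX {X : Type*} [MetricSpace X] (r : ℕ → ℝ) (u v : Set (ℕ → X)) : ℝ :=
  sSup {L : ℝ | ∃ x ∈ u, ∃ y ∈ v,
    Filter.Tendsto (fun n => dist (x n) (y n) / r n) Filter.atTop (nhds L)}

/-- The root `ν₀ = X̃⁰_{∞,r̃}`: sequences with `d(z_n,p) → ∞` and `d(z_n,p)/r_n → 0`. -/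
def rootClass {X : Type*} [MetricSpace X] (r : ℕ → ℝ) (p : X) : Set (ℕ → X) :=
  {z | Filter.Tendsto (fun n => dist (z n) p) Filter.atTop Filter.atTop ∧
    Filter.Tendsto (fun n => dist (z n) p / r n) Filter.atTop (nhds 0)}

/-- The labeling `ρ⁰` of vertices: `ρ⁰(v) = lim d(x_n,p)/r_n` for `x̃ ∈ v`. -/
noncomputable def rho0 {X : Type*} [MetricSpace X] (r : ℕ → ℝ) (p : X)
    (v : Set (ℕ → X)) : ℝ :=
  sSup {L : ℝ | ∃ x ∈ v, Filter.Tendsto (fun n => dist (x n) p / r n) Filter.atTop (nhds L)}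

/-- A self-stable family: a subset of `Seq(X, r̃)` any two of whose members are
mutually stable. -/
def SelfStable {X : Type*} [MetricSpace X] (r : ℕ → ℝ) (p : X) (F : Set (ℕ → X)) : Prop :=
  F ⊆ SeqInf r p ∧ ∀ x ∈ F, ∀ y ∈ F, MutuallyStable r x y

/-- A maximal self-stable set `X̃_{∞, r̃}`. -/
def MaxSelfStable {X : Type*} [MetricSpace X] (r : ℕ → ℝ) (p : X) (F : Set (ℕ → X)) : Prop :=
  SelfStable r p F ∧ ∀ F', SelfStable r p F' → F ⊆ F' → F = F'

/-- The pretangent space `Ω^X_{∞,r̃}` attached to a maximal self-stable set `F`: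
the set of `≡`-classes of members of `F`. -/
def PretangentCl {X : Type*} [MetricSpace X] (r : ℕ → ℝ) (F : Set (ℕ → X)) :
    Set (Set (ℕ → X)) :=
  {v | ∃ x ∈ F, v = {y | y ∈ F ∧ EquivSeq r x y}}

/-- A clique in the cluster graph `G_{X, r̃}`. -/
def IsCliqueCl {X : Type*} [MetricSpace X] (r : ℕ → ℝ) (p : X)
    (C : Set (Set (ℕ → X))) : Prop :=
  C ⊆ VertexSet r p ∧ ∀ u ∈ C, ∀ v ∈ C, u ≠ v → AdjacentCl r p u v

private lemma equiv_self' {X : Type*} [MetricSpace X] (r : ℕ → ℝ) (x : ℕ → X) :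
    EquivSeq r x x := by
  have h : (fun n => dist (x n) (x n) / r n) = fun _ => (0 : ℝ) := by
    funext n; simp
  rw [EquivSeq, h]
  exact tendsto_const_nhds

private lemma equiv_symm' {X : Type*} [MetricSpace X] {r : ℕ → ℝ} {x y : ℕ → X}
    (h : EquivSeq r x y) : EquivSeq r y x := by
  simpa [EquivSeq, dist_comm] using h

private lemma equiv_trans' {X : Type*} [MetricSpace X] {r : ℕ → ℝ} (hr : ∀ n, 0 < r n)
    {x y z : ℕ → X} (h1 : EquivSeq r x y) (h2 : EquivSeq r y z) : EquivSeq r x z := by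
  have hadd := h1.add h2
  rw [add_zero] at hadd
  refine squeeze_zero (fun n => div_nonneg dist_nonneg (hr n).le) (fun n => ?_) hadd
  rw [← add_div]
  exact div_le_div_of_nonneg_right (dist_triangle _ _ _) (hr n).le

/-- Uniqueness of the normalized distance-to-basepoint limit along equivalent sequences. -/
private lemma lim_eq' {X : Type*} [MetricSpace X] {r : ℕ → ℝ} (hr : ∀ n, 0 < r n) {p : X}
    {x y : ℕ → X} {L M : ℝ}
    (hx : Filter.Tendsto (fun n => dist (x n) p / r n) Filter.atTop (nhds L))
    (hy : Filter.Tendsto (fun n => dist (y n) p / r n) Filter.atTop (nhds M))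
    (hxy : EquivSeq r x y) : L = M := by
  have h1 : Filter.Tendsto (fun n => dist (x n) p / r n - dist (y n) p / r n)
      Filter.atTop (nhds (L - M)) := hx.sub hy
  have h2 : Filter.Tendsto (fun n => dist (x n) p / r n - dist (y n) p / r n)
      Filter.atTop (nhds 0) := by
    have hxy' : Filter.Tendsto (fun n => dist (x n) (y n) / r n) Filter.atTop (nhds 0) := hxy
    refine squeeze_zero_norm (fun n => ?_) hxy'
    rw [← sub_div, Real.norm_eq_abs, abs_div, abs_of_pos (hr n)]
    exact div_le_div_of_nonneg_right (abs_dist_sub_le _ _ _) (hr n).le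
  have := tendsto_nhds_unique h1 h2
  linarith

private lemma rho0_classOf' {X : Type*} [MetricSpace X] {r : ℕ → ℝ} (hr : ∀ n, 0 < r n)
    {p : X} {x0 : ℕ → X} (hx0 : x0 ∈ SeqInf r p) {L : ℝ}
    (hL : Filter.Tendsto (fun n => dist (x0 n) p / r n) Filter.atTop (nhds L)) :
    rho0 r p (classOf r p x0) = L := by
  have hset : {L' : ℝ | ∃ x ∈ classOf r p x0,
      Filter.Tendsto (fun n => dist (x n) p / r n) Filter.atTop (nhds L')} = {L} := by
    ext L'
    simp only [Set.mem_setOf_eq, Set.mem_singleton_iff]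
    constructor
    · rintro ⟨x, ⟨hxS, hxe⟩, hx⟩
      exact lim_eq' hr hx hL (equiv_symm' hxe)
    · rintro rfl
      exact ⟨x0, ⟨hx0, equiv_self' r x0⟩, hL⟩
  rw [rho0, hset, csSup_singleton]

/-- Lemma l2.2.14. The labeling `ρ⁰` is injective on `V(G_{X,r̃})`
iff for every infinite subsequence `r̃' = r ∘ φ`, the induced homomorphism
`Em' : V(G_{X,r̃}) → V(G_{X,r̃'})` (sending the class of `x̃` to the class of
`x̃ ∘ φ`) is injective. -/
theorem rho0_injective_iff_em_injective {X : Type*} [MetricSpace X]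
    (hX : UnboundedSpace X) (p : X) (r : ℕ → ℝ) (hr : ScalingSeq r) :
    Set.InjOn (rho0 r p) (VertexSet r p) ↔
      ∀ φ : ℕ → ℕ, StrictMono φ →
        ∀ u ∈ VertexSet r p, ∀ v ∈ VertexSet r p, ∀ x ∈ u, ∀ y ∈ v,
          classOf (fun k => r (φ k)) p (fun k => x (φ k)) =
            classOf (fun k => r (φ k)) p (fun k => y (φ k)) →
          u = v := by
  have hrpos := hr.1
  constructor
  · -- ρ⁰ injective ⇒ Em' injective
    intro hinj φ hφ u hu v hv x hxu y hyv hcl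
    obtain ⟨x0, hx0, rfl⟩ := hu
    obtain ⟨y0, hy0, rfl⟩ := hv
    obtain ⟨hxS, hxe⟩ := hxu
    obtain ⟨hyS, hye⟩ := hyv
    obtain ⟨hxT, Lx, hLx⟩ := id hxS
    obtain ⟨hyT, Ly, hLy⟩ := id hyS
    obtain ⟨hx0T, Lx0, hLx0⟩ := id hx0
    obtain ⟨hy0T, Ly0, hLy0⟩ := id hy0
    have hmono : Filter.Tendsto φ Filter.atTop Filter.atTop := hφ.tendsto_atTop
    -- x∘φ belongs to its own class
    have hxφ : (fun k => x (φ k)) ∈ classOf (fun k => r (φ k)) p (fun k => x (φ k)) :=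
      ⟨⟨hxT.comp hmono, Lx, hLx.comp hmono⟩, equiv_self' _ _⟩
    rw [hcl] at hxφ
    have heq : EquivSeq (fun k => r (φ k)) (fun k => x (φ k)) (fun k => y (φ k)) :=
      equiv_symm' hxφ.2
    have hLxLy : Lx = Ly :=
      lim_eq' (fun k => hrpos (φ k)) (hLx.comp hmono) (hLy.comp hmono) heq
    have h1 : Lx0 = Lx := lim_eq' hrpos hLx0 hLx hxe
    have h2 : Ly0 = Ly := lim_eq' hrpos hLy0 hLy hye
    have hux : rho0 r p (classOf r p x0) = Lx0 := rho0_classOf' hrpos hx0 hLx0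
    have hvy : rho0 r p (classOf r p y0) = Ly0 := rho0_classOf' hrpos hy0 hLy0
    exact hinj ⟨x0, hx0, rfl⟩ ⟨y0, hy0, rfl⟩ (by rw [hux, hvy, h1, h2, hLxLy])
  · -- Em' injective ⇒ ρ⁰ injective
    intro H u hu v hv hrho
    obtain ⟨x0, hx0, rfl⟩ := hu
    obtain ⟨y0, hy0, rfl⟩ := hv
    obtain ⟨hx0T, Lx, hLx⟩ := id hx0
    obtain ⟨hy0T, Ly, hLy⟩ := id hy0
    have hux : rho0 r p (classOf r p x0) = Lx := rho0_classOf' hrpos hx0 hLx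
    have hvy : rho0 r p (classOf r p y0) = Ly := rho0_classOf' hrpos hy0 hLy
    have hLL : Lx = Ly := by rw [← hux, ← hvy, hrho]
    -- interleaved sequence
    set z : ℕ → X := fun n => if Even n then x0 n else y0 n with hzdef
    have hzT : Filter.Tendsto (fun n => dist (z n) p) Filter.atTop Filter.atTop := by
      rw [Filter.tendsto_atTop] at hx0T hy0T ⊢
      intro b
      filter_upwards [hx0T b, hy0T b] with n h1 h2
      by_cases hn : Even n
      · simp only [hzdef]; rw [if_pos hn]; exact h1
      · simp only [hzdef]; rw [if_neg hn]; exact h2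
    have hLy' : Filter.Tendsto (fun n => dist (y0 n) p / r n) Filter.atTop (nhds Lx) := by
      rw [hLL]; exact hLy
    have hzL : Filter.Tendsto (fun n => dist (z n) p / r n) Filter.atTop (nhds Lx) := by
      rw [tendsto_iff_dist_tendsto_zero]
      have hx' := tendsto_iff_dist_tendsto_zero.1 hLx
      have hy' := tendsto_iff_dist_tendsto_zero.1 hLy'
      refine squeeze_zero (fun n => dist_nonneg) (fun n => ?_)
        (by simpa using hx'.max hy')
      by_cases hn : Even n
      · simp only [hzdef]; rw [if_pos hn]; exact le_max_left _ _
      · simp only [hzdef]; rw [if_neg hn]; exact le_max_right _ _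
    have hzS : z ∈ SeqInf r p := ⟨hzT, Lx, hzL⟩
    have hzself : z ∈ classOf r p z := ⟨hzS, equiv_self' r z⟩
    have hx0self : x0 ∈ classOf r p x0 := ⟨hx0, equiv_self' r x0⟩
    have hy0self : y0 ∈ classOf r p y0 := ⟨hy0, equiv_self' r y0⟩
    have hwVS : classOf r p z ∈ VertexSet r p := ⟨z, hzS, rfl⟩
    have hmonoE : StrictMono (fun k : ℕ => 2 * k) := by
      intro a b h; dsimp only; omega
    have hmonoO : StrictMono (fun k : ℕ => 2 * k + 1) := by
      intro a b h; dsimp only; omega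
    have he : classOf r p z = classOf r p x0 := by
      refine H (fun k => 2 * k) hmonoE _ hwVS _ ⟨x0, hx0, rfl⟩ z hzself x0 hx0self ?_
      have hfe : (fun k => z (2 * k)) = fun k => x0 (2 * k) := by
        funext k
        simp only [hzdef]
        rw [if_pos (even_two_mul k)]
      rw [hfe]
    have ho : classOf r p z = classOf r p y0 := by
      refine H (fun k => 2 * k + 1) hmonoO _ hwVS _ ⟨y0, hy0, rfl⟩ z hzself y0 hy0self ?_
      have hfe : (fun k => z (2 * k + 1)) = fun k => y0 (2 * k + 1) := by
        funext k
        simp only [hzdef]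
        rw [if_neg (by rw [Nat.even_iff]; omega)]
      rw [hfe]
    rw [← he, ho]
end

section
/- A finite rooted graph G=G(r) is isomorphic as a rooted graph to a rooted cluster G_{X,r̃}(ν₀) for some unbounded metric space (X,d) and some scaling sequence r̃ if and only if the root r is a dominating vertex of G. -/
open Filter Topology
open scoped Classical

section Aux

open Filter Topology

variable {Y : Type*} [MetricSpace Y] {r : ℕ → ℝ} {p : Y}

lemma div_tendsto_squeeze {a b c : ℕ → ℝ} {L : ℝ}
    (hb : Tendsto b atTop (nhds L)) (hc : Tendsto c atTop (nhds 0))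
    (h1 : ∀ n, b n - c n ≤ a n) (h2 : ∀ n, a n ≤ b n + c n) :
    Tendsto a atTop (nhds L) := by
  have hlo : Tendsto (fun n => b n - c n) atTop (nhds L) := by
    simpa using hb.sub hc
  have hhi : Tendsto (fun n => b n + c n) atTop (nhds L) := by
    simpa using hb.add hc
  exact tendsto_of_tendsto_of_tendsto_of_le_of_le hlo hhi h1 h2

lemma equivSeq_refl (x : ℕ → Y) : EquivSeq r x x := by
  simp only [EquivSeq, dist_self, zero_div]
  exact tendsto_const_nhds

lemma equivSeq_symm {x y : ℕ → Y} (h : EquivSeq r x y) : EquivSeq r y x := by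
  simpa only [EquivSeq, dist_comm] using h

lemma equivSeq_trans (hr : ∀ n, 0 < r n) {x y z : ℕ → Y}
    (h1 : EquivSeq r x y) (h2 : EquivSeq r y z) : EquivSeq r x z := by
  have h := h1.add h2
  rw [add_zero] at h
  refine tendsto_of_tendsto_of_tendsto_of_le_of_le tendsto_const_nhds h ?_ ?_
  · exact fun n => div_nonneg dist_nonneg (hr n).le
  · intro n
    show dist (x n) (z n) / r n ≤ dist (x n) (y n) / r n + dist (y n) (z n) / r n
    rw [← add_div]
    exact div_le_div_of_nonneg_right (dist_triangle (x n) (y n) (z n)) (hr n).le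

lemma mutually_congr (hr : ∀ n, 0 < r n) {x x' y y' : ℕ → Y}
    (hx : EquivSeq r x x') (hy : EquivSeq r y y') {L : ℝ}
    (h : Tendsto (fun n => dist (x n) (y n) / r n) atTop (nhds L)) :
    Tendsto (fun n => dist (x' n) (y' n) / r n) atTop (nhds L) := by
  have hc : Tendsto (fun n => (dist (x n) (x' n) + dist (y n) (y' n)) / r n)
      atTop (nhds 0) := by
    have := hx.add hy
    rw [add_zero] at this
    refine this.congr fun n => by rw [add_div]
  refine div_tendsto_squeeze h hc (fun n => ?_) (fun n => ?_)
  · have key : |dist (x' n) (y' n) - dist (x n) (y n)|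
        ≤ dist (x n) (x' n) + dist (y n) (y' n) := by
      have := dist_dist_dist_le (x n) (y n) (x' n) (y' n)
      rw [Real.dist_eq, abs_sub_comm] at this
      exact this
    have h1 := (abs_le.mp key).1
    rw [← sub_div]
    exact div_le_div_of_nonneg_right (by linarith) (hr n).le
  · have key : |dist (x' n) (y' n) - dist (x n) (y n)|
        ≤ dist (x n) (x' n) + dist (y n) (y' n) := by
      have := dist_dist_dist_le (x n) (y n) (x' n) (y' n)
      rw [Real.dist_eq, abs_sub_comm] at this
      exact this
    have h2 := (abs_le.mp key).2
    rw [← add_div]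
    exact div_le_div_of_nonneg_right (by linarith) (hr n).le

lemma mem_classOf_self {x : ℕ → Y} (hx : x ∈ SeqInf r p) : x ∈ classOf r p x :=
  ⟨hx, equivSeq_refl x⟩

lemma classOf_congr (hr : ∀ n, 0 < r n) {x y : ℕ → Y}
    (hxy : EquivSeq r x y) : classOf r p x = classOf r p y := by
  ext z
  exact ⟨fun ⟨hz, h⟩ => ⟨hz, equivSeq_trans hr (equivSeq_symm hxy) h⟩,
    fun ⟨hz, h⟩ => ⟨hz, equivSeq_trans hr hxy h⟩⟩

lemma seqInf_of_root {x : ℕ → Y} (hx : x ∈ rootClass r p) : x ∈ SeqInf r p :=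
  ⟨hx.1, 0, hx.2⟩

lemma classOf_of_root (hr : ∀ n, 0 < r n) {x : ℕ → Y} (hx : x ∈ rootClass r p) :
    classOf r p x = rootClass r p := by
  ext y
  constructor
  · rintro ⟨⟨hy1, Ly, hy2⟩, hxy⟩
    refine ⟨hy1, ?_⟩
    refine tendsto_of_tendsto_of_tendsto_of_le_of_le tendsto_const_nhds
      (by simpa using (equivSeq_symm hxy).add hx.2) (fun n => div_nonneg dist_nonneg (hr n).le)
      (fun n => ?_)
    have := dist_triangle (y n) (x n) p
    rw [← add_div]
    exact div_le_div_of_nonneg_right this (hr n).le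
  · rintro ⟨hy1, hy2⟩
    refine ⟨⟨hy1, 0, hy2⟩, ?_⟩
    refine tendsto_of_tendsto_of_tendsto_of_le_of_le tendsto_const_nhds
      (by simpa using hx.2.add hy2) (fun n => div_nonneg dist_nonneg (hr n).le)
      (fun n => ?_)
    have h := dist_triangle (x n) p (y n)
    rw [← add_div]
    rw [dist_comm (y n) p] at *
    exact div_le_div_of_nonneg_right (by simpa [dist_comm] using h) (hr n).le

lemma rootClass_mem_vertexSet (hr : ∀ n, 0 < r n) {x : ℕ → Y} (hx : x ∈ rootClass r p) :
    rootClass r p ∈ VertexSet r p :=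
  ⟨x, seqInf_of_root hx, (classOf_of_root hr hx).symm⟩

lemma mutuallyStable_of_root (hr : ∀ n, 0 < r n) {x y : ℕ → Y}
    (hx : x ∈ rootClass r p) (hy : y ∈ SeqInf r p) : MutuallyStable r x y := by
  obtain ⟨_, L, hy2⟩ := hy
  refine ⟨L, mutually_congr hr (x := fun _ => p) (x' := x) (y := y) (y' := y)
    ?_ (equivSeq_refl y) ?_⟩
  · simpa only [EquivSeq, dist_comm] using hx.2
  · simpa only [dist_comm] using hy2

end Aux

section Aux2
variable {Y : Type*} [MetricSpace Y] {r : ℕ → ℝ}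

lemma mutuallyStable_symm {x y : ℕ → Y} (h : MutuallyStable r x y) : MutuallyStable r y x := by
  obtain ⟨L, hL⟩ := h
  exact ⟨L, by simpa [dist_comm] using hL⟩

end Aux2
namespace ClusterConstruction

open Filter Topology

abbrev Pt (k : ℕ) := Option ((Fin k × ℕ) ⊕ ℕ)

noncomputable def Lf {k : ℕ} (i : Fin k) : ℝ := (i : ℕ) + 2

noncomputable def rr (n : ℕ) : ℝ := 2 ^ (n ^ 2 + n)

lemma rr_pos (n : ℕ) : 0 < rr n := by unfold rr; positivity

lemma two_le_Lf {k : ℕ} (i : Fin k) : 2 ≤ Lf i := by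
  simp only [Lf]
  have : (0 : ℝ) ≤ (i : ℕ) := Nat.cast_nonneg _
  linarith

lemma Lf_le {k : ℕ} (i : Fin k) : Lf i ≤ k + 1 := by
  simp only [Lf]
  have : ((i : ℕ) : ℝ) ≤ (k : ℝ) - 1 := by
    have := i.isLt
    have : ((i : ℕ) : ℝ) + 1 ≤ (k : ℝ) := by exact_mod_cast Nat.succ_le_of_lt i.isLt
    linarith
  linarith

lemma Lf_pos {k : ℕ} (i : Fin k) : 0 < Lf i := lt_of_lt_of_le (by norm_num) (two_le_Lf i)

lemma Lf_inj {k : ℕ} {i j : Fin k} (h : Lf i = Lf j) : i = j := by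
  simp only [Lf, add_left_inj, Nat.cast_inj] at h
  exact Fin.ext h

noncomputable def rad {k : ℕ} : Pt k → ℝ
  | none => 0
  | some (Sum.inl (i, m)) => Lf i * rr m
  | some (Sum.inr m) => 2 ^ (m ^ 2)

lemma rad_nonneg {k : ℕ} (x : Pt k) : 0 ≤ rad x := by
  rcases x with _ | (⟨i, m⟩ | m)
  · exact le_refl 0
  · exact mul_nonneg (Lf_pos i).le (rr_pos m).le
  · show (0 : ℝ) ≤ 2 ^ (m ^ 2)
    positivity

lemma rad_pos {k : ℕ} {x : Pt k} (h : x ≠ none) : 0 < rad x := by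
  rcases x with _ | (⟨i, m⟩ | m)
  · exact absurd rfl h
  · exact mul_pos (Lf_pos i) (rr_pos m)
  · show (0 : ℝ) < 2 ^ (m ^ 2)
    positivity

variable {k : ℕ} (A : Fin k → Fin k → Prop)

noncomputable def cfac (i j : Fin k) (m : ℕ) : ℝ :=
  if A i j ∨ A j i ∨ Even m then Lf i + Lf j else max (Lf i) (Lf j)

lemma cfac_comm (i j : Fin k) (m : ℕ) : cfac A i j m = cfac A j i m := by
  unfold cfac
  by_cases h : A i j ∨ A j i ∨ Even m
  · rw [if_pos h, if_pos (by tauto), add_comm]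
  · rw [if_neg h, if_neg (by tauto), max_comm]

lemma le_cfac (i j : Fin k) (m : ℕ) : max (Lf i) (Lf j) ≤ cfac A i j m := by
  unfold cfac
  split
  · exact max_le (by have := Lf_pos j; linarith) (by have := Lf_pos i; linarith)
  · exact le_refl _

lemma cfac_le (i j : Fin k) (m : ℕ) : cfac A i j m ≤ Lf i + Lf j := by
  unfold cfac
  split
  · exact le_refl _
  · exact max_le (by have := Lf_pos j; linarith) (by have := Lf_pos i; linarith)

noncomputable def qd : Pt k → Pt k → ℝ
  | some (Sum.inl (i, m)), some (Sum.inl (j, m')) =>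
      if m = m' then cfac A i j m * rr m else Lf i * rr m + Lf j * rr m'
  | x, y => rad x + rad y

lemma qd_le (x y : Pt k) : qd A x y ≤ rad x + rad y := by
  have base : ∀ x y : Pt k, rad x + rad y ≤ rad x + rad y := fun _ _ => le_refl _
  rcases x with _ | (⟨i, m⟩ | m) <;> rcases y with _ | (⟨j, m'⟩ | m') <;>
    try exact le_refl _
  show (if m = m' then cfac A i j m * rr m else Lf i * rr m + Lf j * rr m')
      ≤ rad (some (Sum.inl (i, m))) + rad (some (Sum.inl (j, m')))
  show (if m = m' then cfac A i j m * rr m else Lf i * rr m + Lf j * rr m')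
      ≤ Lf i * rr m + Lf j * rr m'
  split
  · next h =>
      subst h
      rw [← add_mul]
      exact mul_le_mul_of_nonneg_right (cfac_le A i j m) (rr_pos m).le
  · exact le_refl _

lemma le_qd (x y : Pt k) : rad x ≤ qd A x y := by
  rcases x with _ | (⟨i, m⟩ | m) <;> rcases y with _ | (⟨j, m'⟩ | m') <;>
    try exact le_add_of_nonneg_right (rad_nonneg _)
  show Lf i * rr m ≤ if m = m' then cfac A i j m * rr m else Lf i * rr m + Lf j * rr m'
  split
  · exact mul_le_mul_of_nonneg_right ((le_max_left _ _).trans (le_cfac A i j _)) (rr_pos m).le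
  · exact le_add_of_nonneg_right (mul_nonneg (Lf_pos j).le (rr_pos m').le)

lemma qd_comm (x y : Pt k) : qd A x y = qd A y x := by
  rcases x with _ | (⟨i, m⟩ | m) <;> rcases y with _ | (⟨j, m'⟩ | m') <;>
    try exact add_comm (rad _) (rad _)
  show (if m = m' then cfac A i j m * rr m else Lf i * rr m + Lf j * rr m')
      = if m' = m then cfac A j i m' * rr m' else Lf j * rr m' + Lf i * rr m
  by_cases h : m = m'
  · subst h
    rw [if_pos rfl, if_pos rfl, cfac_comm]
  · rw [if_neg h, if_neg (Ne.symm h), add_comm]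

lemma qd_pos {x y : Pt k} (h : x ≠ y) : 0 < qd A x y := by
  rcases x with _ | (⟨i, m⟩ | m) <;> rcases y with _ | (⟨j, m'⟩ | m')
  · exact absurd rfl h
  · exact add_pos_of_nonneg_of_pos (rad_nonneg _) (rad_pos (by simp))
  · exact add_pos_of_nonneg_of_pos (rad_nonneg _) (rad_pos (by simp))
  · exact add_pos_of_pos_of_nonneg (rad_pos (by simp)) (rad_nonneg _)
  · show 0 < if m = m' then cfac A i j m * rr m else Lf i * rr m + Lf j * rr m'
    split
    · exact mul_pos (lt_of_lt_of_le (Lf_pos i) ((le_max_left _ _).trans (le_cfac A i j _)))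
        (rr_pos m)
    · exact add_pos (mul_pos (Lf_pos i) (rr_pos m)) (mul_pos (Lf_pos j) (rr_pos m'))
  · exact add_pos_of_pos_of_nonneg (rad_pos (by simp)) (rad_nonneg _)
  · exact add_pos_of_pos_of_nonneg (rad_pos (by simp)) (rad_nonneg _)
  · exact add_pos_of_pos_of_nonneg (rad_pos (by simp)) (rad_nonneg _)
  · exact add_pos_of_pos_of_nonneg (rad_pos (by simp)) (rad_nonneg _)

noncomputable def dd (x y : Pt k) : ℝ := if x = y then 0 else qd A x y

lemma dd_self (x : Pt k) : dd A x x = 0 := if_pos rfl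

lemma dd_comm (x y : Pt k) : dd A x y = dd A y x := by
  unfold dd
  by_cases h : x = y
  · subst h; rfl
  · rw [if_neg h, if_neg (Ne.symm h), qd_comm]

lemma dd_pos {x y : Pt k} (h : x ≠ y) : 0 < dd A x y := by
  rw [dd, if_neg h]; exact qd_pos A h

lemma dd_le (x y : Pt k) : dd A x y ≤ rad x + rad y := by
  unfold dd
  split
  · exact add_nonneg (rad_nonneg _) (rad_nonneg _)
  · exact qd_le A x y

lemma le_dd {x y : Pt k} (h : x ≠ y) : rad x ≤ dd A x y := by
  rw [dd, if_neg h]; exact le_qd A x y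

lemma dd_triangle (x y z : Pt k) : dd A x z ≤ dd A x y + dd A y z := by
  by_cases hxy : x = y
  · subst hxy; rw [dd_self, zero_add]
  by_cases hyz : y = z
  · subst hyz; rw [dd_self, add_zero]
  calc dd A x z ≤ rad x + rad z := dd_le A x z
    _ ≤ dd A x y + dd A y z := by
        refine add_le_add (le_dd A hxy) ?_
        rw [dd_comm]
        exact le_dd A (Ne.symm hyz)

noncomputable def ptMetric : MetricSpace (Pt k) :=
  { dist := dd A
    dist_self := dd_self A
    dist_comm := dd_comm A
    dist_triangle := dd_triangle A
    eq_of_dist_eq_zero := fun {x y} h => by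
      by_contra hne
      exact (dd_pos A hne).ne' h }

lemma dist_eq (x y : Pt k) : @dist _ (ptMetric A).toDist x y = dd A x y := rfl

end ClusterConstruction
namespace ClusterConstruction

open Filter Topology

lemma pow2_div_le {a b c : ℕ} (h : a + c ≤ b) : (2:ℝ) ^ a / 2 ^ b ≤ (1/2) ^ c := by
  rw [div_le_iff₀ (by positivity)]
  have h1 : ((1:ℝ)/2) ^ c * 2 ^ b = 2 ^ b / 2 ^ c := by
    rw [one_div, inv_pow]
    ring
  rw [h1, le_div_iff₀ (by positivity), ← pow_add]
  exact pow_le_pow_right₀ one_le_two h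

lemma pow2_div_ge {a b c : ℕ} (h : b + c ≤ a) : (2:ℝ) ^ c ≤ 2 ^ a / 2 ^ b := by
  rw [le_div_iff₀ (by positivity), ← pow_add]
  exact pow_le_pow_right₀ one_le_two (by omega)

lemma le_rr (n : ℕ) : (2:ℝ) ^ n ≤ rr n := by
  unfold rr
  exact pow_le_pow_right₀ one_le_two (by nlinarith)

lemma tendsto_rr : Tendsto rr atTop atTop :=
  tendsto_atTop_mono le_rr (tendsto_pow_atTop_atTop_of_one_lt one_lt_two)

lemma scalingSeq_rr : ScalingSeq rr := ⟨rr_pos, tendsto_rr⟩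

variable {k : ℕ} (A : Fin k → Fin k → Prop)

def qseq (i : Fin k) : ℕ → Pt k := fun n => some (Sum.inl (i, n))

def bseq : ℕ → Pt k := fun n => some (Sum.inr n)

lemma dd_none_right (x : Pt k) (h : x ≠ none) : dd A x none = rad x := by
  rw [dd, if_neg h]
  rcases x with _ | (⟨i, m⟩ | m)
  · exact absurd rfl h
  · exact add_zero _
  · exact add_zero _

lemma dd_q_none (i : Fin k) (n : ℕ) : dd A (qseq i n) none = Lf i * rr n :=
  dd_none_right A _ (by simp [qseq])

lemma dd_b_none (n : ℕ) : dd A (bseq (k := k) n) none = 2 ^ (n ^ 2) :=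
  dd_none_right A _ (by simp [bseq])

lemma dd_q_q {i j : Fin k} (hij : i ≠ j) (n : ℕ) :
    dd A (qseq i n) (qseq j n) = cfac A i j n * rr n := by
  rw [dd, if_neg (by simp [qseq, hij])]
  show (if n = n then cfac A i j n * rr n else _) = _
  rw [if_pos rfl]

end ClusterConstruction

open ClusterConstruction in
/-- Corollary c2.2.22. A finite rooted graph `G(rt)` is isomorphic
(as a rooted graph) to the rooted cluster `G_{X,r̃}(ν₀)` of some unbounded metric
space and scaling sequence iff the root `rt` is a dominating vertex of `G`. -/
theorem finite_rooted_cluster_iff_dominating {V : Type*} [Fintype V]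
    (G : SimpleGraph V) (rt : V) :
    (∃ (X : Type) (_ : MetricSpace X), UnboundedSpace X ∧
      ∃ r : ℕ → ℝ, ScalingSeq r ∧ ∃ p : X, ∃ f : V → Set (ℕ → X),
        Function.Injective f ∧ (∀ a, f a ∈ VertexSet r p) ∧
        (∀ u ∈ VertexSet r p, ∃ a, f a = u) ∧
        f rt = rootClass r p ∧
        (∀ a b : V, G.Adj a b ↔ AdjacentCl r p (f a) (f b))) ↔
    (∀ v : V, v ≠ rt → G.Adj rt v) := by
  classical
  constructor
  · rintro ⟨X, _inst, _hX, r, hr, p, f, hinj, hmem, _hsurj, hroot, hadj⟩ v hv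
    rw [hadj rt v]
    obtain ⟨x₀, hx₀, hfv⟩ := hmem v
    refine ⟨hmem rt, hmem v, fun h => hv (hinj h).symm, ?_⟩
    intro x hx y hy
    rw [hroot] at hx
    rw [hfv] at hy
    exact mutuallyStable_of_root hr.1 hx hy.1
  · intro hdom
    set k := Fintype.card {v : V // v ≠ rt} with hk
    let e : {v : V // v ≠ rt} ≃ Fin k := Fintype.equivFin _
    let A : Fin k → Fin k → Prop := fun i j => G.Adj (e.symm i : V) (e.symm j : V)
    letI M : MetricSpace (Pt k) := ptMetric A
    have hdist : ∀ x y : Pt k, dist x y = dd A x y := fun _ _ => rfl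
    have hrpos : ∀ n, 0 < rr n := rr_pos
    -- basic facts about the canonical sequences
    have hq_ratio : ∀ (i : Fin k) (n : ℕ),
        dist (qseq i n) (none : Pt k) / rr n = Lf i := by
      intro i n
      rw [hdist, dd_q_none, mul_div_assoc, div_self (hrpos n).ne', mul_one]
    have hq_seqinf : ∀ i : Fin k, qseq i ∈ SeqInf rr (none : Pt k) := by
      intro i
      constructor
      · have h1 : Tendsto (fun n => Lf i * rr n) atTop atTop :=
          tendsto_rr.const_mul_atTop (Lf_pos i)
        refine h1.congr fun n => ?_
        rw [hdist, dd_q_none]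
      · refine ⟨Lf i, ?_⟩
        refine tendsto_const_nhds.congr fun n => ?_
        rw [hq_ratio]
    have hq_tendsto : ∀ i : Fin k,
        Tendsto (fun n => dist (qseq i n) (none : Pt k) / rr n) atTop (nhds (Lf i)) := by
      intro i
      refine tendsto_const_nhds.congr fun n => ?_
      rw [hq_ratio]
    have hb_root : bseq ∈ rootClass rr (none : Pt k) := by
      constructor
      · have h1 : Tendsto (fun n : ℕ => (2:ℝ) ^ (n ^ 2)) atTop atTop := by
          refine tendsto_atTop_mono (fun n => ?_) (tendsto_pow_atTop_atTop_of_one_lt one_lt_two)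
          exact pow_le_pow_right₀ one_le_two (Nat.le_self_pow two_ne_zero n)
        refine h1.congr fun n => ?_
        rw [hdist, dd_b_none]
      · have h2 : Tendsto (fun n : ℕ => ((1:ℝ)/2) ^ n) atTop (nhds 0) :=
          tendsto_pow_atTop_nhds_zero_of_lt_one (by norm_num) (by norm_num)
        refine tendsto_of_tendsto_of_tendsto_of_le_of_le tendsto_const_nhds h2
          (fun n => div_nonneg dist_nonneg (hrpos n).le) (fun n => ?_)
        rw [hdist, dd_b_none]
        show (2:ℝ) ^ (n ^ 2) / 2 ^ (n ^ 2 + n) ≤ (1/2 : ℝ) ^ n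
        exact pow2_div_le le_rfl
    have hroot_vs : rootClass rr (none : Pt k) ∈ VertexSet rr none :=
      rootClass_mem_vertexSet hrpos hb_root
    -- the vertex map
    let f : V → Set (ℕ → Pt k) := fun v =>
      if h : v = rt then rootClass rr none else classOf rr none (qseq (e ⟨v, h⟩))
    have hf_rt : f rt = rootClass rr none := dif_pos rfl
    have hf_ne : ∀ (v : V) (h : v ≠ rt), f v = classOf rr none (qseq (e ⟨v, h⟩)) :=
      fun v h => dif_neg h
    have hclass_ne_root : ∀ i : Fin k, classOf rr none (qseq i) ≠ rootClass rr none := by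
      intro i h
      have hmem : qseq i ∈ rootClass rr (none : Pt k) := by
        rw [← h]; exact mem_classOf_self (hq_seqinf i)
      have h1 := tendsto_nhds_unique (hq_tendsto i) hmem.2
      have h2 := two_le_Lf i
      linarith
    have hclass_inj : ∀ i j : Fin k,
        classOf rr none (qseq i) = classOf rr none (qseq j) → i = j := by
      intro i j h
      by_contra hij
      have hmem : qseq j ∈ classOf rr none (qseq i) := by
        rw [h]; exact mem_classOf_self (hq_seqinf j)
      have hge : ∀ n, (2:ℝ) ≤ dist (qseq i n) (qseq j n) / rr n := by
        intro n
        rw [hdist, dd_q_q A hij n, mul_div_assoc, div_self (hrpos n).ne', mul_one]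
        exact (two_le_Lf i).trans ((le_max_left _ _).trans (le_cfac A i j n))
      have h0 : (2:ℝ) ≤ 0 := ge_of_tendsto hmem.2 (Filter.Eventually.of_forall hge)
      norm_num at h0
    -- injectivity
    have hInj : Function.Injective f := by
      intro a b h
      by_cases ha : a = rt <;> by_cases hb : b = rt
      · rw [ha, hb]
      · rw [ha, hf_rt, hf_ne b hb] at h
        exact absurd h.symm (hclass_ne_root _)
      · rw [hb, hf_rt, hf_ne a ha] at h
        exact absurd h (hclass_ne_root _)
      · rw [hf_ne a ha, hf_ne b hb] at h
        have h1 := hclass_inj _ _ h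
        have h2 : (⟨a, ha⟩ : {v : V // v ≠ rt}) = ⟨b, hb⟩ := e.injective h1
        exact congrArg Subtype.val h2
    have hMem : ∀ a, f a ∈ VertexSet rr (none : Pt k) := by
      intro a
      by_cases ha : a = rt
      · rw [ha, hf_rt]; exact hroot_vs
      · rw [hf_ne a ha]
        exact ⟨qseq _, hq_seqinf _, rfl⟩
    -- unboundedness
    have hUnb : UnboundedSpace (Pt k) := by
      intro hb
      rw [Metric.isBounded_iff] at hb
      obtain ⟨C, hC⟩ := hb
      obtain ⟨m, hm⟩ := pow_unbounded_of_one_lt C (one_lt_two (α := ℝ))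
      have h1 := hC (Set.mem_univ (bseq (k := k) m)) (Set.mem_univ (none : Pt k))
      rw [hdist, dd_b_none] at h1
      have h2 : (2:ℝ) ^ m ≤ 2 ^ (m ^ 2) :=
        pow_le_pow_right₀ one_le_two (Nat.le_self_pow two_ne_zero m)
      linarith
    -- surjectivity
    have hSurj : ∀ u ∈ VertexSet rr (none : Pt k), ∃ a, f a = u := by
      rintro u ⟨x, hx, rfl⟩
      obtain ⟨hxinf, L, hL⟩ := hx
      have hnn : ∀ n, 0 ≤ dist (x n) (none : Pt k) / rr n :=
        fun n => div_nonneg dist_nonneg (hrpos n).le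
      have hL0 : 0 ≤ L := ge_of_tendsto hL (Filter.Eventually.of_forall hnn)
      rcases eq_or_lt_of_le hL0 with hL0' | hLpos
      · -- L = 0 : the class is the root class
        have hxroot : x ∈ rootClass rr (none : Pt k) := ⟨hxinf, hL0' ▸ hL⟩
        exact ⟨rt, hf_rt.trans (classOf_of_root hrpos hxroot).symm⟩
      · -- L > 0 : the sequence eventually follows some qseq
        have stepA : ∀ n, (¬ ∃ i, x n = qseq i n) →
            dist (x n) (none : Pt k) / rr n ≤ (k+1) * (1/2) ^ n ∨
            (2:ℝ) ^ (n+1) ≤ dist (x n) (none : Pt k) / rr n := by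
          intro n hn
          rcases hxn : x n with _ | (⟨i, m⟩ | m)
          · left
            rw [dist_self, zero_div]
            positivity
          · have hmn : m ≠ n := by
              intro h
              exact hn ⟨i, by rw [hxn, h]; rfl⟩
            rw [hdist, dd_none_right A _ (by simp)]
            show Lf i * rr m / rr n ≤ _ ∨ _ ≤ Lf i * rr m / rr n
            rw [mul_div_assoc]
            rcases lt_or_gt_of_ne hmn with hlt | hgt
            · left
              have hdivle : rr m / rr n ≤ (1/2 : ℝ) ^ n := by
                show (2:ℝ) ^ (m ^ 2 + m) / 2 ^ (n ^ 2 + n) ≤ _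
                exact pow2_div_le (by nlinarith [Nat.pow_le_pow_left hlt 2])
              exact mul_le_mul (Lf_le i) hdivle (div_nonneg (hrpos m).le (hrpos n).le) (by positivity)
            · right
              have hdivge : (2:ℝ) ^ (n+1) ≤ rr m / rr n := by
                show _ ≤ (2:ℝ) ^ (m ^ 2 + m) / 2 ^ (n ^ 2 + n)
                exact pow2_div_ge (by nlinarith [Nat.pow_le_pow_left hgt 2])
              calc (2:ℝ) ^ (n+1) = 1 * 2 ^ (n+1) := (one_mul _).symm
                _ ≤ Lf i * (rr m / rr n) :=
                    mul_le_mul (by linarith [two_le_Lf i]) hdivge (by positivity) (Lf_pos i).le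
          · rw [hdist, dd_none_right A _ (by simp)]
            show (2:ℝ) ^ (m ^ 2) / rr n ≤ _ ∨ _ ≤ (2:ℝ) ^ (m ^ 2) / rr n
            rcases le_or_gt m n with hle | hgt
            · left
              have h1 : (2:ℝ) ^ (m ^ 2) / rr n ≤ (1/2 : ℝ) ^ n := by
                show (2:ℝ) ^ (m ^ 2) / 2 ^ (n ^ 2 + n) ≤ _
                exact pow2_div_le (by nlinarith [Nat.pow_le_pow_left hle 2])
              exact h1.trans (le_mul_of_one_le_left (by positivity) (by norm_num))
            · right
              show _ ≤ (2:ℝ) ^ (m ^ 2) / 2 ^ (n ^ 2 + n)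
              exact pow2_div_ge (by nlinarith [Nat.pow_le_pow_left hgt 2])
        set ε := min (1/2 : ℝ) (L/2) with hε
        have hεpos : 0 < ε := lt_min (by norm_num) (by linarith)
        have hev1 : ∀ᶠ n : ℕ in atTop, (k+1 : ℝ) * (1/2) ^ n < L/2 := by
          have h0 : Tendsto (fun n : ℕ => (k+1 : ℝ) * (1/2) ^ n) atTop (nhds 0) := by
            have h3 := tendsto_pow_atTop_nhds_zero_of_lt_one
              (by norm_num : (0:ℝ) ≤ 1/2) (by norm_num : (1/2:ℝ) < 1)
            simpa using h3.const_mul (k+1 : ℝ)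
          exact h0.eventually_lt_const (by linarith)
        have hev2 : ∀ᶠ n : ℕ in atTop, (2*L : ℝ) < 2 ^ (n+1) := by
          have h0 : Tendsto (fun n : ℕ => (2:ℝ) ^ (n+1)) atTop atTop :=
            (tendsto_pow_atTop_atTop_of_one_lt one_lt_two).comp (tendsto_add_atTop_nat 1)
          exact h0.eventually_gt_atTop _
        have hev3 : ∀ᶠ n : ℕ in atTop, |dist (x n) (none : Pt k) / rr n - L| < ε := by
          obtain ⟨N, hN⟩ := Metric.tendsto_atTop.mp hL ε hεpos
          refine Filter.eventually_atTop.mpr ⟨N, fun n hn => ?_⟩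
          have h4 := hN n hn
          rwa [Real.dist_eq] at h4
        have hevq : ∀ᶠ n : ℕ in atTop, ∃ i, x n = qseq i n ∧ |Lf i - L| < 1/2 := by
          filter_upwards [hev1, hev2, hev3] with n h1 h2 h3
          have hεle : ε ≤ L/2 := min_le_right _ _
          have hrlo : L/2 < dist (x n) (none : Pt k) / rr n := by
            have h5 := (abs_lt.mp h3).1
            linarith
          have hrhi : dist (x n) (none : Pt k) / rr n < 2*L := by
            have h5 := (abs_lt.mp h3).2
            linarith
          by_cases hq : ∃ i, x n = qseq i n
          · obtain ⟨i, hi⟩ := hq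
            refine ⟨i, hi, ?_⟩
            have h6 : dist (x n) (none : Pt k) / rr n = Lf i := by rw [hi, hq_ratio]
            rw [h6] at h3
            exact lt_of_lt_of_le h3 (min_le_left _ _)
          · rcases stepA n hq with hsm | hlg
            · linarith
            · linarith
        obtain ⟨N, hN⟩ := Filter.eventually_atTop.mp hevq
        obtain ⟨i₀, _, hLi₀⟩ := hN N le_rfl
        have hxev : ∀ n, N ≤ n → x n = qseq i₀ n := by
          intro n hn
          obtain ⟨i, hi, hLi⟩ := hN n hn
          have hii : i = i₀ := by
            rw [abs_sub_lt_iff] at hLi hLi₀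
            have c1 : ((i:ℕ):ℝ) < ((i₀:ℕ):ℝ) + 1 := by
              simp only [Lf] at hLi hLi₀
              linarith [hLi.1, hLi₀.2]
            have c2 : ((i₀:ℕ):ℝ) < ((i:ℕ):ℝ) + 1 := by
              simp only [Lf] at hLi hLi₀
              linarith [hLi.2, hLi₀.1]
            have d1 : (i:ℕ) < (i₀:ℕ) + 1 := by exact_mod_cast c1
            have d2 : (i₀:ℕ) < (i:ℕ) + 1 := by exact_mod_cast c2
            exact Fin.ext (by omega)
          rw [hi, hii]
        have hequiv : EquivSeq rr x (qseq i₀) := by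
          refine tendsto_const_nhds.congr' ?_
          filter_upwards [Filter.eventually_atTop.mpr ⟨N, hxev⟩] with n hn
          rw [hn, dist_self, zero_div]
        refine ⟨(e.symm i₀ : {v : V // v ≠ rt}).1, ?_⟩
        rw [hf_ne _ (e.symm i₀).2]
        have hei : e ⟨(e.symm i₀).1, (e.symm i₀).2⟩ = i₀ := by
          simpa using e.apply_symm_apply i₀
        rw [hei]
        exact classOf_congr hrpos (equivSeq_symm hequiv)
    -- adjacency
    have hAdj : ∀ a b : V, G.Adj a b ↔ AdjacentCl rr (none : Pt k) (f a) (f b) := by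
      intro a b
      by_cases hab : a = b
      · subst hab
        exact iff_of_false (G.irrefl) (fun h => h.2.2.1 rfl)
      by_cases ha : a = rt
      · have hb : b ≠ rt := fun h => hab (ha.trans h.symm)
        rw [ha, hf_rt, hf_ne b hb]
        refine iff_of_true (hdom b hb) ?_
        exact ⟨hroot_vs, ⟨qseq _, hq_seqinf _, rfl⟩, Ne.symm (hclass_ne_root _),
          fun x hx y hy => mutuallyStable_of_root hrpos hx hy.1⟩
      by_cases hb : b = rt
      · rw [hb, hf_rt, hf_ne a ha]
        refine iff_of_true ((hdom a ha).symm) ?_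
        exact ⟨⟨qseq _, hq_seqinf _, rfl⟩, hroot_vs, hclass_ne_root _,
          fun x hx y hy => mutuallyStable_symm (mutuallyStable_of_root hrpos hy hx.1)⟩
      · rw [hf_ne a ha, hf_ne b hb]
        set i := e ⟨a, ha⟩ with hidef
        set j := e ⟨b, hb⟩ with hjdef
        have hij : i ≠ j := by
          intro h
          exact hab (congrArg Subtype.val (e.injective h))
        have hAij : A i j ↔ G.Adj a b := by
          show G.Adj (e.symm (e ⟨a, ha⟩) : V) (e.symm (e ⟨b, hb⟩) : V) ↔ _
          rw [Equiv.symm_apply_apply, Equiv.symm_apply_apply]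
        have hAji : A j i ↔ G.Adj a b := by
          show G.Adj (e.symm (e ⟨b, hb⟩) : V) (e.symm (e ⟨a, ha⟩) : V) ↔ _
          rw [Equiv.symm_apply_apply, Equiv.symm_apply_apply]
          exact G.adj_comm b a
        have hratio : ∀ n, dist (qseq i n) (qseq j n) / rr n = cfac A i j n := by
          intro n
          rw [hdist, dd_q_q A hij n, mul_div_assoc, div_self (hrpos n).ne', mul_one]
        constructor
        · intro hG
          have hbase : Tendsto (fun n => dist (qseq i n) (qseq j n) / rr n) atTop
              (nhds (Lf i + Lf j)) := by
            refine tendsto_const_nhds.congr fun n => ?_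
            rw [hratio]
            unfold ClusterConstruction.cfac
            rw [if_pos (Or.inl (hAij.mpr hG))]
          exact ⟨⟨qseq _, hq_seqinf _, rfl⟩, ⟨qseq _, hq_seqinf _, rfl⟩,
            fun h => hij (hclass_inj _ _ h),
            fun x hx y hy => ⟨Lf i + Lf j, mutually_congr hrpos hx.2 hy.2 hbase⟩⟩
        · intro hAdjCl
          by_contra hG
          obtain ⟨_, _, _, hstab⟩ := hAdjCl
          obtain ⟨Mv, hMv⟩ := hstab (qseq i) (mem_classOf_self (hq_seqinf i))
            (qseq j) (mem_classOf_self (hq_seqinf j))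
          have heven : Mv = Lf i + Lf j := by
            have h2t : Tendsto (fun t : ℕ => 2*t) atTop atTop :=
              tendsto_atTop_mono (fun t => Nat.le_mul_of_pos_left t two_pos) tendsto_id
            have hconst : Tendsto (fun _ : ℕ => Lf i + Lf j) atTop (nhds Mv) := by
              refine (hMv.comp h2t).congr fun t => ?_
              show dist (qseq i (2*t)) (qseq j (2*t)) / rr (2*t) = _
              rw [hratio]
              unfold ClusterConstruction.cfac
              rw [if_pos (Or.inr (Or.inr ⟨t, by ring⟩))]
            exact tendsto_nhds_unique hconst tendsto_const_nhds
          have hodd : Mv = max (Lf i) (Lf j) := by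
            have h2t : Tendsto (fun t : ℕ => 2*t+1) atTop atTop :=
              tendsto_atTop_mono (fun t => (Nat.le_mul_of_pos_left t two_pos).trans (Nat.le_succ _))
                tendsto_id
            have hconst : Tendsto (fun _ : ℕ => max (Lf i) (Lf j)) atTop (nhds Mv) := by
              refine (hMv.comp h2t).congr fun t => ?_
              show dist (qseq i (2*t+1)) (qseq j (2*t+1)) / rr (2*t+1) = _
              rw [hratio]
              unfold ClusterConstruction.cfac
              rw [if_neg ?_]
              rintro (h | h | h)
              · exact hG (hAij.mp h)
              · exact hG (hAji.mp h)
              · rw [Nat.even_iff] at h; omega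
            exact tendsto_nhds_unique hconst tendsto_const_nhds
          have h2i := two_le_Lf i
          have h2j := two_le_Lf j
          rcases max_cases (Lf i) (Lf j) with ⟨hm, _⟩ | ⟨hm, _⟩ <;>
            rw [hm] at hodd <;> rw [heven] at hodd <;> linarith
    exact ⟨Pt k, M, hUnb, rr, scalingSeq_rr, none, f, hInj, hMem, hSurj, hf_rt, hAdj⟩
end
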